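/- For every n ≥ 7, every decycling set S of the cube of the n-cycle Cₙ³ contains three cyclically consecutive vertices, i.e., there exists i ∈ ℤ/nℤ with i, i+1, i+2 all in S. -/

import Mathlib

open SimpleGraph

/-- `S` is a decycling set of `G` if the subgraph of `G` induced on the complement of `S`
is acyclic. -/
def SimpleGraph.IsDecyclingSet {V : Type*} (G : SimpleGraph V) (S : Set V) : Prop :=
  (G.induce Sᶜ).IsAcyclic

/-- The decycling number `∇(G)` of `G`: the minimum cardinality of a decycling set of `G`. -/
noncomputable def SimpleGraph.decyclingNumber {V : Type*} (G : SimpleGraph V) : ℕ :=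
  sInf {k | ∃ S : Set V, G.IsDecyclingSet S ∧ S.ncard = k}

/-- The cube `Cₙ³` of the `n`-cycle: vertex set `ZMod n`, with `i` adjacent to `j` iff
`i ≠ j` and `i - j ≡ ±1`, `±2`, or `±3 (mod n)`. -/
def cycleCube (n : ℕ) : SimpleGraph (ZMod n) where
  Adj i j := i ≠ j ∧ (i - j = 1 ∨ j - i = 1 ∨ i - j = 2 ∨ j - i = 2 ∨ i - j = 3 ∨ j - i = 3)
  symm := ⟨by intro i j ⟨h, hd⟩; exact ⟨h.symm, by tauto⟩⟩
  loopless := ⟨by intro i ⟨h, _⟩; exact h rfl⟩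



section aux

variable {n : ℕ}

/-- small nat casts nonzero in ZMod n for n ≥ 7 -/
lemma cast_small_ne_zero (hn : 7 ≤ n) {g : ℕ} (hg : 0 < g) (hg6 : g ≤ 6) :
    (g : ZMod n) ≠ 0 := by
  haveI : NeZero n := ⟨by omega⟩
  intro h
  rw [ZMod.natCast_eq_zero_iff] at h
  have := Nat.le_of_dvd hg h
  omega

lemma adj_add_of_gap (hn : 7 ≤ n) {g : ℕ} (hg : 0 < g) (hg3 : g ≤ 3) (y : ZMod n) :
    (cycleCube n).Adj y (y + g) := by
  constructor
  · intro h
    have : (g : ZMod n) = 0 := by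
      have := h
      nth_rewrite 1 [show y = y + 0 by ring] at this
      exact (add_left_cancel this.symm)
    exact cast_small_ne_zero hn hg (by omega) this
  · have : y + (g:ZMod n) - y = (g:ZMod n) := by ring
    interval_cases g
    · right; left; rw [this]; norm_cast
    · right; right; right; left; rw [this]; norm_cast
    · right; right; right; right; right; rw [this]; norm_cast

end aux

/-- For every `n ≥ 7`, every decycling set `S` of `Cₙ³` contains three cyclically consecutive
vertices: there is `i ∈ ℤ/nℤ` with `i, i+1, i+2` all in `S`. -/
theorem cycleCube_decyclingSet_consecutive_triple (n : ℕ) (hn : 7 ≤ n) (S : Set (ZMod n))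
    (hS : (cycleCube n).IsDecyclingSet S) :
    ∃ i : ZMod n, i ∈ S ∧ i + 1 ∈ S ∧ i + 2 ∈ S := by
  haveI : NeZero n := ⟨by omega⟩
  by_contra hcon
  push_neg at hcon
  -- key: for every y ∈ Sᶜ, there is a gap g ∈ {1,2,3} with y + g ∈ Sᶜ
  have hnext : ∀ y : ZMod n, y ∈ Sᶜ → ∃ g : ℕ, 0 < g ∧ g ≤ 3 ∧ y + g ∈ Sᶜ ∧
      (∀ g' : ℕ, 0 < g' → g' < g → y + g' ∉ Sᶜ) := by
    intro y hy
    by_cases h1 : y + 1 ∈ Sᶜ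
    · exact ⟨1, by norm_num, by norm_num, by simpa using h1, by omega⟩
    by_cases h2 : y + 2 ∈ Sᶜ
    · refine ⟨2, by norm_num, by norm_num, by simpa using h2, ?_⟩
      intro g' hg'0 hg'2
      interval_cases g'
      simpa using h1
    · -- y+1 ∈ S, y+2 ∈ S, so y+3 ∉ S by no-triple at i = y+1
      refine ⟨3, by norm_num, by norm_num, ?_, ?_⟩
      · have h1' : y + 1 ∈ S := by simpa using h1
        have h2' : y + (2:ℕ) ∈ S := by
          simp only [Set.mem_compl_iff, not_not] at h2; exact h2
        have h3 := hcon (y + 1) h1' (by rw [show y+1+1 = y+2 by ring]; simpa using h2)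
        simp only [Set.mem_compl_iff]
        intro h4
        apply h3
        rw [show y+1+2 = y + ((3:ℕ):ZMod n) by push_cast; ring]
        exact h4
      · intro g' hg'0 hg'3
        interval_cases g'
        · simpa using h1
        · simpa using h2
  -- Sᶜ is nonempty
  obtain ⟨x0, hx0⟩ : ∃ x, x ∈ Sᶜ := by
    by_cases h : (0 : ZMod n) ∈ S
    · by_cases h1 : (0:ZMod n) + 1 ∈ S
      · have := hcon 0 h h1
        exact ⟨(0:ZMod n)+2, this⟩
      · exact ⟨(0:ZMod n)+1, h1⟩
    · exact ⟨0, h⟩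
  obtain ⟨g0, hg00, hg03, hx0g, -⟩ := hnext x0 hx0
  -- the induced graph and the edge to delete
  set H : SimpleGraph ↥Sᶜ := (cycleCube n).induce Sᶜ with hH
  have hadjH : H.Adj ⟨x0, hx0⟩ ⟨x0 + g0, hx0g⟩ := by
    simp only [hH, comap_adj, Function.Embedding.coe_subtype]
    exact adj_add_of_gap hn hg00 hg03 x0
  have hbridge := (isAcyclic_iff_forall_adj_isBridge.mp hS) hadjH
  rw [isBridge_iff] at hbridge
  apply hbridge
  apply Reachable.symm
  -- reachability: walk forward from x0 + g0 back to x0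
  set H' : SimpleGraph ↥Sᶜ := H \ fromEdgeSet {s(⟨x0, hx0⟩, ⟨x0 + g0, hx0g⟩)} with hH'
  suffices key : ∀ k : ℕ, ∀ y : ZMod n, ∀ hy : y ∈ Sᶜ, (x0 - y).val = k →
      H'.Reachable ⟨y, hy⟩ ⟨x0, hx0⟩ by
    exact key _ _ hx0g rfl
  intro k
  induction k using Nat.strong_induction_on with
  | _ k ih =>
    intro y hy hyk
    rcases Nat.eq_zero_or_pos k with hk0 | hkpos
    · have : x0 - y = 0 := by
        have : (x0 - y).val = 0 := by omega
        exact (ZMod.val_eq_zero _).mp this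
      have hxy : y = x0 := by
        have := sub_eq_zero.mp this
        exact this.symm
      subst hxy
      exact Reachable.refl _
    · obtain ⟨g, hg0, hg3, hyg, hmin⟩ := hnext y hy
      -- show g ≤ k : otherwise x0 = y + k with k < g ≤ 3, but then minimality fails
      have hkn : k < n := hyk ▸ ZMod.val_lt _
      have hgk : g ≤ k := by
        by_contra hgk
        push_neg at hgk
        have hx0y : x0 = y + (k : ℕ) := by
          have : ((x0 - y).val : ZMod n) = (k : ZMod n) := by rw [hyk]
          rw [ZMod.natCast_val, ZMod.cast_id] at this
          have := this
          linear_combination this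
        exact hmin k hkpos hgk (hx0y ▸ hx0)
      -- the step edge
      have hadj : H.Adj ⟨y, hy⟩ ⟨y + g, hyg⟩ := by
        simp only [hH, comap_adj, Function.Embedding.coe_subtype]
        exact adj_add_of_gap hn hg0 hg3 y
      have hne : y ≠ x0 := by
        intro h; subst h
        simp [ZMod.val_zero] at hyk
        omega
      have hstep : H'.Adj ⟨y, hy⟩ ⟨y + g, hyg⟩ := by
        rw [hH']
        simp only [sdiff_adj, fromEdgeSet_adj, Set.mem_singleton_iff]
        refine ⟨hadj, ?_⟩
        rintro ⟨he, -⟩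
        rw [Sym2.eq_iff] at he
        rcases he with ⟨h1, h2⟩ | ⟨h1, h2⟩
        · exact hne (congrArg Subtype.val h1)
        · -- y = x0 + g0 and y + g = x0 : then g0 + g ≡ 0
          have h1' : y = x0 + g0 := congrArg Subtype.val h1
          have h2' : y + (g:ZMod n) = x0 := congrArg Subtype.val h2
          rw [h1'] at h2'
          have : ((g0 + g : ℕ) : ZMod n) = 0 := by push_cast; linear_combination h2'
          exact cast_small_ne_zero hn (by omega) (by omega) this
      -- compute new measure
      have hval : (x0 - (y + g)).val = k - g := by
        have e1 : x0 - (y + g) = ((k - g : ℕ) : ZMod n) := by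
          have hx0y : x0 - y = ((k : ℕ) : ZMod n) := by
            have : ((x0 - y).val : ZMod n) = (k : ZMod n) := by rw [hyk]
            rwa [ZMod.natCast_val, ZMod.cast_id] at this
          rw [Nat.cast_sub hgk]
          linear_combination hx0y
        rw [e1, ZMod.val_cast_of_lt (by omega)]
      exact (hstep.reachable).trans (ih (k - g) (by omega) (y + g) hyg hval)
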